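/- For every real T ≥ 4 and every integer N with 3 ≤ N ≤ ⌈T-1⌉, the partial sum ∑_{k=3}^{N} (log k)/(k-1) is at most (log T)^2/2 + 0.683. -/

import Mathlib

set_option maxHeartbeats 1000000
open Real Finset

lemma log1p_lb {t : ℝ} (h0 : 0 < t) (h1 : t ≤ 1/8) :
    t - t^2/2 - 2*t^3 ≤ Real.log (1+t) := by
  have habs : |(-t)| < 1 := by rw [abs_neg, abs_of_pos h0]; linarith
  have h := Real.abs_log_sub_add_sum_range_le habs 2
  simp [Finset.sum_range_succ, abs_neg, abs_of_pos h0] at h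
  rw [abs_le] at h
  have h2 : t^3 / (1-t) ≤ 2*t^3 := by
    rw [div_le_iff₀ (by linarith)]
    nlinarith [pow_pos h0 3]
  nlinarith [h.1]

lemma step' {x : ℝ} (hx : 9 ≤ x) :
    Real.log x/(x-1) + (3/4*Real.log (x+1)+5/4)/(x-1)
      ≤ ((Real.log x)^2 - (Real.log (x-1))^2)/2 + (3/4*Real.log x + 5/4)/(x-2) := by
  have hx1 : (0:ℝ) < x - 1 := by linarith
  have hx2 : (0:ℝ) < x - 2 := by linarith
  have hx0 : (0:ℝ) < x := by linarith
  set A := Real.log (x-1) with hA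
  set B := Real.log x with hB
  set C := Real.log (x+1) with hC
  set t : ℝ := 1/(x-1) with ht
  set s : ℝ := 1/(x-2) with hs
  have ht0 : 0 < t := by positivity
  have hs0 : 0 < s := by positivity
  have htx : t * (x-1) = 1 := by rw [ht]; field_simp
  have hsx : s * (x-2) = 1 := by rw [hs]; field_simp
  have ht8 : t ≤ 1/8 := by
    rw [ht, div_le_div_iff₀ hx1 (by norm_num)]; linarith
  have hts : t ≤ s := by
    rw [ht, hs]
    exact div_le_div_of_nonneg_left one_pos.le hx2 (by linarith) |>.trans_eq rfl
  -- u = B - A = log(1+t)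
  have hfrac : x/(x-1) = 1 + t := by rw [ht]; field_simp; ring
  have hu : B - A = Real.log (1+t) := by
    rw [hB, hA, ← Real.log_div (ne_of_gt hx0) (ne_of_gt hx1), hfrac]
  have hu0 : 0 ≤ B - A := by rw [hu]; exact Real.log_nonneg (by linarith)
  have hu1 : B - A ≤ t := by
    rw [hu]
    have := Real.log_le_sub_one_of_pos (show (0:ℝ) < 1+t by linarith)
    linarith
  have hu2 : t - t^2/2 - 2*t^3 ≤ B - A := by rw [hu]; exact log1p_lb ht0 ht8
  -- C ≤ B + 1/x
  have hfrac2 : (x+1)/x = 1 + 1/x := by field_simp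
  have hCB : C - B ≤ 1/x := by
    rw [hC, hB, ← Real.log_div (by positivity) (ne_of_gt hx0), hfrac2]
    have := Real.log_le_sub_one_of_pos (show (0:ℝ) < 1+1/x by positivity)
    linarith
  have hBC : B ≤ C := Real.log_le_log (by linarith) (by linarith)
  have hA0 : 0 ≤ A := Real.log_nonneg (by linarith)
  have hB0 : 0 ≤ B := Real.log_nonneg (by linarith)
  clear_value A B C t s
  -- rewrite goal divisions as products
  have hgoal : B/(x-1) = B*t := by rw [ht]; ring
  have hg2 : (3/4*C+5/4)/(x-1) = (3/4*C+5/4)*t := by rw [ht]; ring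
  have hg3 : (3/4*B+5/4)/(x-2) = (3/4*B+5/4)*s := by rw [hs]; ring
  rw [hgoal, hg2, hg3]
  -- telescope bound
  have key : 3/4*B + 1/2 ≤ (3/4*B+5/4)*(x-1) - (3/4*C+5/4)*(x-2) := by
    have h1 : (C-B)*(x-2) ≤ (1/x)*(x-2) := by nlinarith
    have h2 : (1/x)*(x-2) ≤ 1 := by
      rw [div_mul_eq_mul_div, one_mul, div_le_one hx0]; linarith
    nlinarith
  have e1 : (3/4*B+5/4)*s = ((3/4*B+5/4)*(x-1))*(s*t) := by
    rw [ht, hs]; field_simp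
  have e2 : (3/4*C+5/4)*t = ((3/4*C+5/4)*(x-2))*(s*t) := by
    rw [ht, hs]; field_simp
  have hst0 : 0 < s*t := mul_pos hs0 ht0
  have tel : (3/4*B+1/2)*(s*t) ≤ (3/4*B+5/4)*s - (3/4*C+5/4)*t := by
    rw [e1, e2]
    linarith [mul_le_mul_of_nonneg_right key hst0.le]
  -- quadratic bound
  have hu' : (B-A)^2 ≤ t^2 := by nlinarith
  have hrhs : (t - t^2/2 - 2*t^3)*B - t^2/2 ≤ (B^2-A^2)/2 := by
    have h1 : (t - t^2/2 - 2*t^3)*B ≤ (B-A)*B :=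
      mul_le_mul_of_nonneg_right hu2 hB0
    nlinarith
  have h2tB : 2*t*B ≤ B/4 := by nlinarith
  have hfin : (t^2/2 + 2*t^3)*B + t^2/2 ≤ (3/4*B+1/2)*(t*t) := by
    have := mul_le_mul_of_nonneg_left h2tB (sq_nonneg t)
    nlinarith
  have hss : (3/4*B+1/2)*(t*t) ≤ (3/4*B+1/2)*(s*t) := by
    have : t*t ≤ s*t := mul_le_mul_of_nonneg_right hts ht0.le
    nlinarith
  linarith


-- base case numerics
lemma base8 : (∑ k ∈ Finset.Icc (3:ℕ) 8, Real.log (k:ℝ) / ((k:ℝ)-1))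
    + (3/4*Real.log ((8:ℝ)+1) + 5/4)/((8:ℝ)-1) ≤ (Real.log (8:ℝ))^2/2 + 0.683 := by
  rw [show (Finset.Icc 3 8 : Finset ℕ) = {3,4,5,6,7,8} from rfl]
  rw [Finset.sum_insert (by decide), Finset.sum_insert (by decide),
      Finset.sum_insert (by decide), Finset.sum_insert (by decide),
      Finset.sum_insert (by decide), Finset.sum_singleton]
  push_cast
  norm_num
  have h4 : Real.log 4 = 2*Real.log 2 := by
    rw [show (4:ℝ) = 2^2 by norm_num, Real.log_pow]; push_cast; ring
  have h6 : Real.log 6 = Real.log 2 + Real.log 3 := by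
    rw [show (6:ℝ) = 2*3 by norm_num, Real.log_mul (by norm_num) (by norm_num)]
  have h8 : Real.log 8 = 3*Real.log 2 := by
    rw [show (8:ℝ) = 2^3 by norm_num, Real.log_pow]; push_cast; ring
  have h9 : Real.log 9 = 2*Real.log 3 := by
    rw [show (9:ℝ) = 3^2 by norm_num, Real.log_pow]; push_cast; ring
  have h3u : 41*Real.log 3 ≤ 65*Real.log 2 := by
    have : Real.log ((3:ℝ)^41) ≤ Real.log ((2:ℝ)^65) :=
      Real.log_le_log (by positivity) (by norm_num)
    rw [Real.log_pow, Real.log_pow] at this; push_cast at this; linarith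
  have h5u : 31*Real.log 5 ≤ 72*Real.log 2 := by
    have : Real.log ((5:ℝ)^31) ≤ Real.log ((2:ℝ)^72) :=
      Real.log_le_log (by positivity) (by norm_num)
    rw [Real.log_pow, Real.log_pow] at this; push_cast at this; linarith
  have h7u : 26*Real.log 7 ≤ 73*Real.log 2 := by
    have : Real.log ((7:ℝ)^26) ≤ Real.log ((2:ℝ)^73) :=
      Real.log_le_log (by positivity) (by norm_num)
    rw [Real.log_pow, Real.log_pow] at this; push_cast at this; linarith
  have h2u : Real.log 2 < 0.6931471808 := Real.log_two_lt_d9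
  have h2l : 0.6931471803 < Real.log 2 := Real.log_two_gt_d9
  have h3l : 0 ≤ Real.log 3 := Real.log_nonneg (by norm_num)
  have h5l : 0 ≤ Real.log 5 := Real.log_nonneg (by norm_num)
  have h7l : 0 ≤ Real.log 7 := Real.log_nonneg (by norm_num)
  rw [h4, h6, h8, h9]
  nlinarith [sq_nonneg (Real.log 2 - 0.6931471803), h2l, h2u]


lemma L1 (N : ℕ) (hN : 8 ≤ N) :
    (∑ k ∈ Finset.Icc (3:ℕ) N, Real.log (k:ℝ) / ((k:ℝ)-1))
      + (3/4*Real.log ((N:ℝ)+1) + 5/4)/((N:ℝ)-1) ≤ (Real.log (N:ℝ))^2/2 + 0.683 := by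
  induction N, hN using Nat.le_induction with
  | base => exact_mod_cast base8
  | succ n hn ih =>
    rw [Finset.sum_Icc_succ_top (by omega : (3:ℕ) ≤ n+1)]
    have hn9 : (9:ℝ) ≤ (n:ℝ)+1 := by
      have : (8:ℝ) ≤ (n:ℝ) := by exact_mod_cast hn
      linarith
    have hst := step' hn9
    have e1 : ((n:ℝ)+1)-1 = (n:ℝ) := by ring
    have e2 : ((n:ℝ)+1)-2 = (n:ℝ)-1 := by ring
    rw [e1, e2] at hst
    push_cast
    have e3 : ((n:ℝ)+1)-1 = (n:ℝ) := by ring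
    rw [e3]
    linarith

lemma dstep (M : ℕ) (hM : 3 ≤ M) :
    ((Real.log ((M:ℝ)+1))^2 - (Real.log (M:ℝ))^2)/2 ≤ Real.log ((M:ℝ)+1)/(M:ℝ) := by
  have hM3 : (3:ℝ) ≤ (M:ℝ) := by exact_mod_cast hM
  have hM0 : (0:ℝ) < (M:ℝ) := by linarith
  have hL0 : 0 ≤ Real.log (M:ℝ) := Real.log_nonneg (by linarith)
  have hL1 : 0 ≤ Real.log ((M:ℝ)+1) := Real.log_nonneg (by linarith)
  have hmono : Real.log (M:ℝ) ≤ Real.log ((M:ℝ)+1) :=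
    Real.log_le_log (by linarith) (by linarith)
  have hfrac : ((M:ℝ)+1)/(M:ℝ) = 1 + 1/(M:ℝ) := by field_simp
  have hu : Real.log ((M:ℝ)+1) - Real.log (M:ℝ) ≤ 1/(M:ℝ) := by
    rw [← Real.log_div (by positivity) (ne_of_gt hM0), hfrac]
    have := Real.log_le_sub_one_of_pos (show (0:ℝ) < 1+1/(M:ℝ) by positivity)
    linarith
  have h1 : (Real.log ((M:ℝ)+1) - Real.log (M:ℝ)) * Real.log ((M:ℝ)+1)
      ≤ (1/(M:ℝ)) * Real.log ((M:ℝ)+1) := mul_le_mul_of_nonneg_right hu hL1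
  have h2 : (1/(M:ℝ)) * Real.log ((M:ℝ)+1) = Real.log ((M:ℝ)+1)/(M:ℝ) := by ring
  nlinarith [h1]

lemma mono (N M : ℕ) (h3 : 3 ≤ N) (hNM : N ≤ M) :
    (∑ k ∈ Finset.Icc (3:ℕ) N, Real.log (k:ℝ) / ((k:ℝ)-1)) - (Real.log (N:ℝ))^2/2
      ≤ (∑ k ∈ Finset.Icc (3:ℕ) M, Real.log (k:ℝ) / ((k:ℝ)-1)) - (Real.log (M:ℝ))^2/2 := by
  induction M, hNM using Nat.le_induction with
  | base => exact le_refl _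
  | succ m hm ih =>
    rw [Finset.sum_Icc_succ_top (by omega : (3:ℕ) ≤ m+1)]
    have hd := dstep m (le_trans h3 hm)
    push_cast
    have e3 : ((m:ℝ)+1)-1 = (m:ℝ) := by ring
    rw [e3]
    linarith

/-- For every real T ≥ 4 and integer N with 3 ≤ N ≤ ⌈T-1⌉,
∑_{k=3}^{N} (log k)/(k-1) ≤ (log T)^2/2 + 0.683. -/
theorem partial_sum_log_div_pred :
    ∀ (T : ℝ), 4 ≤ T → ∀ N : ℕ, 3 ≤ N → (N : ℤ) ≤ ⌈T - 1⌉ →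
      (∑ k ∈ Finset.Icc 3 N, Real.log (k : ℝ) / ((k : ℝ) - 1)) ≤
        (Real.log T) ^ 2 / 2 + 0.683 := by
  intro T hT N hN3 hNc
  have hNT : (N:ℝ) < T := by
    have h1 : ((N:ℤ):ℝ) ≤ (⌈T-1⌉:ℝ) := by exact_mod_cast hNc
    have h2 : (⌈T-1⌉:ℝ) < (T-1)+1 := Int.ceil_lt_add_one (T-1)
    push_cast at h1
    linarith
  have hN1 : (1:ℝ) ≤ (N:ℝ) := by
    have : (3:ℝ) ≤ (N:ℝ) := by exact_mod_cast hN3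
    linarith
  have hlogN : 0 ≤ Real.log (N:ℝ) := Real.log_nonneg hN1
  have hlogNT : Real.log (N:ℝ) ≤ Real.log T := Real.log_le_log (by linarith) hNT.le
  have hsq : (Real.log (N:ℝ))^2 ≤ (Real.log T)^2 := by nlinarith
  have main : (∑ k ∈ Finset.Icc (3:ℕ) N, Real.log (k:ℝ) / ((k:ℝ)-1))
      ≤ (Real.log (N:ℝ))^2/2 + 0.683 := by
    rcases le_or_gt 8 N with h8 | h8
    · have := L1 N h8
      have hg : 0 ≤ (3/4*Real.log ((N:ℝ)+1) + 5/4)/((N:ℝ)-1) := by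
        have : 0 ≤ Real.log ((N:ℝ)+1) := Real.log_nonneg (by linarith)
        exact div_nonneg (by linarith) (by linarith)
      linarith
    · have hm := mono N 8 hN3 (by omega)
      have h18 := L1 8 (le_refl 8)
      have hg : 0 ≤ (3/4*Real.log ((8:ℝ)+1) + 5/4)/((8:ℝ)-1) := by
        have : 0 ≤ Real.log ((8:ℝ)+1) := Real.log_nonneg (by norm_num)
        positivity
      push_cast at h18 hm
      linarith
  linarith
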